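/- Let A be a finite-dimensional algebra over a field k and U an indecomposable finite-dimensional A-module. If in the decomposition soc U = ⊕ᵢ Sᵢ into simple modules all the Sᵢ are pairwise non-isomorphic, and no Sᵢ appears as a composition factor of U / soc U, then U is a brick, i.e., every nonzero endomorphism of U is an isomorphism (equivalently, End_A(U) is a division ring, here End_A(U) ≅ k since k is algebraically closed). -/

import Mathlib

universe u

/-- A module is indecomposable: it is nonzero and admits no nontrivial direct sum
decomposition. -/
def IsIndecModule (A : Type u) [Ring A] (M : Type u) [AddCommGroup M] [Module A M] : Prop :=
  (∃ m : M, m ≠ 0) ∧ ∀ N P : Submodule A M, IsCompl N P → N = ⊥ ∨ N = ⊤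

/-- The socle of a module: the sum of all simple submodules. -/
def Msocle (A : Type u) [Ring A] (M : Type u) [AddCommGroup M] [Module A M] : Submodule A M :=
  sSup {S : Submodule A M | IsSimpleModule A S}

section CovSeries

variable {α : Type*} [CompleteLattice α] [WellFoundedLT α] [WellFoundedGT α]

lemma exists_covSeries_to (N : α) :
    ∃ s : RelSeries {(x, y) : α × α | x ⋖ y}, s.head = ⊥ ∧ s.last = N := by
  haveI : WellFoundedLT (Set.Iic N) := by
    constructor
    exact InvImage.wf (fun x : Set.Iic N => (x : α)) wellFounded_lt
  haveI : WellFoundedGT (Set.Iic N) := by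
    constructor
    exact InvImage.wf (fun x : Set.Iic N => (x : α)) wellFounded_gt
  obtain ⟨a, h0, n, hn, hstep⟩ := exists_covBy_seq_of_wellFoundedLT_wellFoundedGT (Set.Iic N)
  refine ⟨⟨n, fun i => (a i : α), ?_⟩, ?_, ?_⟩
  · intro i
    have hcov := hstep i i.2
    refine ⟨hcov.1, fun c hc1 hc2 => ?_⟩
    exact hcov.2
      (show a i < ⟨c, le_of_lt (lt_of_lt_of_le hc2 (a (i + 1)).2)⟩ from hc1) hc2
  · show (a 0 : α) = ⊥
    exact le_antisymm (h0 (show (⟨⊥, bot_le⟩ : Set.Iic N) ≤ a 0 from bot_le)) bot_le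
  · show (a n : α) = N
    exact le_antisymm (a n).2 (hn (show a n ≤ ⟨N, le_rfl⟩ from (a n).2))

lemma exists_covSeries_from (W : α) :
    ∃ s : RelSeries {(x, y) : α × α | x ⋖ y}, s.head = W ∧ s.last = ⊤ := by
  haveI : WellFoundedLT (Set.Ici W) := by
    constructor
    exact InvImage.wf (fun x : Set.Ici W => (x : α)) wellFounded_lt
  haveI : WellFoundedGT (Set.Ici W) := by
    constructor
    exact InvImage.wf (fun x : Set.Ici W => (x : α)) wellFounded_gt
  obtain ⟨a, h0, n, hn, hstep⟩ := exists_covBy_seq_of_wellFoundedLT_wellFoundedGT (Set.Ici W)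
  refine ⟨⟨n, fun i => (a i : α), ?_⟩, ?_, ?_⟩
  · intro i
    have hcov := hstep i i.2
    refine ⟨hcov.1, fun c hc1 hc2 => ?_⟩
    exact hcov.2
      (show a i < ⟨c, le_of_lt (lt_of_le_of_lt (a i.castSucc).2 hc1)⟩ from hc1) hc2
  · show (a 0 : α) = W
    exact le_antisymm (h0 (show (⟨W, le_rfl⟩ : Set.Ici W) ≤ a 0 from (a 0).2)) (a 0).2
  · show (a n : α) = ⊤
    exact le_antisymm le_top (hn (show a n ≤ ⟨⊤, le_top⟩ from le_top))

lemma exists_covSeries_through {N W : α} (h : N ⋖ W) :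
    ∃ s : RelSeries {(x, y) : α × α | x ⋖ y}, s.head = ⊥ ∧ s.last = ⊤ ∧
      ∃ i : Fin s.length, s i.castSucc = N ∧ s i.succ = W := by
  obtain ⟨p, hp0, hp1⟩ := exists_covSeries_to N
  obtain ⟨q, hq0, hq1⟩ := exists_covSeries_from W
  have connect : p.last ⋖ q.head := by rw [hp1, hq0]; exact h
  refine ⟨p.append q connect, by simp [hp0], by simp [hq1],
    ⟨p.length, by simp [RelSeries.append_length]⟩, ?_, ?_⟩
  · have happ := RelSeries.append_apply_left p q connect (Fin.last p.length)
    rw [← hp1]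
    refine Eq.trans ?_ happ
    congr 1
  · have happ := RelSeries.append_apply_right p q connect 0
    rw [← hq0]
    refine Eq.trans ?_ happ
    congr 1

end CovSeries

/-- If the socle of an indecomposable module `U` is multiplicity-free (all simple summands
pairwise non-isomorphic) and none of its simple submodules occurs as a composition factor
of `U / soc U`, then `U` is a brick: every nonzero endomorphism is an isomorphism. -/
theorem stmt0 (k A U : Type u) [Field k] [IsAlgClosed k] [Ring A] [Algebra k A]
    [FiniteDimensional k A] [AddCommGroup U] [Module k U] [Module A U] [IsScalarTower k A U]
    [FiniteDimensional k U]
    (hind : IsIndecModule A U)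
    (hmf : ∀ S₁ S₂ : Submodule A U, IsSimpleModule A S₁ → IsSimpleModule A S₂ → S₁ ≠ S₂ →
      IsEmpty (S₁ ≃ₗ[A] S₂))
    (hnocf : ∀ S : Submodule A U, IsSimpleModule A S →
      ∀ s : CompositionSeries (Submodule A (U ⧸ Msocle A U)), s.head = ⊥ → s.last = ⊤ →
        ∀ i : Fin s.length,
          IsEmpty ((↥(s i.succ) ⧸ Submodule.comap (s i.succ).subtype (s i.castSucc)) ≃ₗ[A] S)) :
    ∀ f : U →ₗ[A] U, f ≠ 0 → Function.Bijective f := by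
  haveI : IsNoetherian A U := isNoetherian_of_tower k inferInstance
  haveI : IsArtinian A U := isArtinian_of_tower k inferInstance
  intro f hf
  obtain ⟨n, hn⟩ := Filter.eventually_atTop.mp f.eventually_isCompl_ker_pow_range_pow
  have hc := hn (n + 1) (Nat.le_succ n)
  rcases hind.2 _ _ hc with hbot | htop
  · -- kernel of f ^ (n+1) is ⊥ : f is injective, hence bijective
    have hker : LinearMap.ker f ≤ LinearMap.ker (f ^ (n + 1)) := by
      rw [pow_succ, Module.End.mul_eq_comp]
      exact LinearMap.ker_le_ker_comp f (f ^ n)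
    have hinj : Function.Injective f := by
      rw [← LinearMap.ker_eq_bot]
      exact le_bot_iff.mp (hbot ▸ hker)
    exact ⟨hinj, IsArtinian.surjective_of_injective_endomorphism f hinj⟩
  · -- f ^ (n+1) = 0 : derive a contradiction
    exfalso
    have hm0 : f ^ (n + 1) = 0 := LinearMap.ker_eq_top.mp htop
    -- every simple submodule is killed by f
    have hsimple : ∀ S : Submodule A U, IsSimpleModule A S → S ≤ LinearMap.ker f := by
      intro S hS
      by_contra hns
      set g : ↥S →ₗ[A] U := f.comp S.subtype with hg
      have hker : LinearMap.ker g = ⊥ := by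
        rcases eq_bot_or_eq_top (LinearMap.ker g) with h | h
        · exact h
        · exfalso
          apply hns
          intro x hx
          have : (⟨x, hx⟩ : ↥S) ∈ LinearMap.ker g := h ▸ Submodule.mem_top
          simpa [hg, LinearMap.mem_ker] using this
      have hginj : Function.Injective g := LinearMap.ker_eq_bot.mp hker
      have e0 : ↥S ≃ₗ[A] ↥(LinearMap.range g) := LinearEquiv.ofInjective g hginj
      have hrange : LinearMap.range g = Submodule.map f S := by
        rw [hg, LinearMap.range_comp, Submodule.range_subtype]
      haveI : IsSimpleModule A ↥S := hS
      have hmap_simple : IsSimpleModule A ↥(Submodule.map f S) := by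
        rw [← hrange]; exact IsSimpleModule.congr e0.symm
      have heq : Submodule.map f S = S := by
        by_contra hne
        exact (hmf (Submodule.map f S) S hmap_simple hS hne).false
          ((LinearEquiv.ofEq _ _ hrange.symm).trans e0.symm)
      have hpow : ∀ j : ℕ, Submodule.map (f ^ j) S = S := by
        intro j
        induction j with
        | zero => rw [pow_zero, Module.End.one_eq_id, Submodule.map_id]
        | succ j ih =>
          rw [pow_succ, Module.End.mul_eq_comp, Submodule.map_comp, heq, ih]
      have hScontra := hpow (n + 1)
      rw [hm0] at hScontra
      simp only [Submodule.map_zero] at hScontra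
      exact (isSimpleModule_iff_isAtom.mp hS).1 hScontra.symm
    have hsoc : Msocle A U ≤ LinearMap.ker f := sSup_le fun S hS => hsimple S hS
    set fbar : (U ⧸ Msocle A U) →ₗ[A] U := (Msocle A U).liftQ f hsoc with hfbar
    have hrangef : LinearMap.range fbar = LinearMap.range f := Submodule.range_liftQ _ _ _
    have hne : LinearMap.range fbar ≠ ⊥ := by
      rw [hrangef]
      exact fun h => hf (LinearMap.range_eq_bot.mp h)
    haveI : IsAtomic (Submodule A U) := isAtomic_of_orderBot_wellFounded_lt IsWellFounded.wf
    obtain ⟨T, hTatom, hTle⟩ := (eq_bot_or_exists_atom_le (LinearMap.range fbar)).resolve_left hne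
    haveI hTs : IsSimpleModule A ↥T := isSimpleModule_iff_isAtom.mpr hTatom
    set N := LinearMap.ker fbar with hN
    set W := T.comap fbar with hW
    have hNW : N ≤ W := by
      intro x hx
      have : fbar x = 0 := hx
      simp [hW, Submodule.mem_comap, this]
    set g : ↥W →ₗ[A] ↥T :=
      (fbar.comp W.subtype).codRestrict T (fun x => x.2) with hgdef
    have hgsurj : Function.Surjective g := by
      intro t
      obtain ⟨q, hq⟩ := hTle t.2
      exact ⟨⟨q, show fbar q ∈ T by rw [hq]; exact t.2⟩, Subtype.ext hq⟩
    have hgker : LinearMap.ker g = N.comap W.subtype := by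
      ext x
      show g x = 0 ↔ fbar (W.subtype x) = 0
      exact ⟨fun h => congrArg Subtype.val h, fun h => Subtype.ext h⟩
    have e : (↥W ⧸ N.comap W.subtype) ≃ₗ[A] ↥T :=
      (Submodule.quotEquivOfEq _ _ hgker.symm).trans (g.quotKerEquivOfSurjective hgsurj)
    haveI hQs : IsSimpleModule A (↥W ⧸ N.comap W.subtype) := IsSimpleModule.congr e
    have hcov : N ⋖ W := (covBy_iff_quot_is_simple hNW).mpr hQs
    obtain ⟨s, hs0, hs1, i, hi1, hi2⟩ := exists_covSeries_through hcov
    have hempty := hnocf T hTs s hs0 hs1 i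
    rw [hi1, hi2] at hempty
    exact hempty.false e
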